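/- Let f : ℝ^d → ℝ be L-smooth and let h : ℝ^d → ℝ^d be any L-Lipschitz map. Fix w ∈ ℝ^d with h(w) ≠ 0, ρ > 0, η > 0, and a mask m ∈ {0,1}^d. Set w̃ = w + ρ·(h(w)/‖h(w)‖) ⊙ m and e = ρ·(h(w)/‖h(w)‖) ⊙ (1 − m). Then f(w − η·h(w̃)) ≤ f(w) − (Lη²/2)‖∇f(w)‖² + Lη²‖∇f(w) − h(w)‖² + 2η²L³·(ρ² + ‖e‖²) − (1 − Lη)·η·⟨∇f(w), h(w̃)⟩. -/

import Mathlib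

open RealInnerProductSpace

/-- Componentwise (Hadamard) product on `EuclideanSpace ℝ (Fin d)`. -/
noncomputable def hadamard {d : ℕ} (x y : EuclideanSpace ℝ (Fin d)) :
    EuclideanSpace ℝ (Fin d) :=
  (EuclideanSpace.equiv (Fin d) ℝ).symm (fun i => x i * y i)

/-- The all-ones vector in `EuclideanSpace ℝ (Fin d)`. -/
noncomputable def onesVec (d : ℕ) : EuclideanSpace ℝ (Fin d) :=
  (EuclideanSpace.equiv (Fin d) ℝ).symm (fun _ => 1)

/-- The descent lemma for `L`-smooth functions. -/
lemma descent_lemma_aux {d : ℕ} (f : EuclideanSpace ℝ (Fin d) → ℝ) (L : ℝ) (hL : 0 < L)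
    (hdiff : Differentiable ℝ f)
    (hsmooth : ∀ w v : EuclideanSpace ℝ (Fin d),
      ‖gradient f w - gradient f v‖ ≤ L * ‖w - v‖)
    (x v : EuclideanSpace ℝ (Fin d)) :
    f (x + v) ≤ f x + ⟪gradient f x, v⟫ + L / 2 * ‖v‖ ^ 2 := by
  set g := gradient f with hg
  have hgcont : Continuous g := by
    have : LipschitzWith (Real.toNNReal L) g :=
      LipschitzWith.of_dist_le_mul fun a b => by
        rw [dist_eq_norm, dist_eq_norm]
        simpa [Real.coe_toNNReal L hL.le] using hsmooth a b
    exact this.continuous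
  have hlinec : Continuous fun t : ℝ => x + t • v := by continuity
  have hderiv : ∀ t : ℝ, HasDerivAt (fun t : ℝ => f (x + t • v)) ⟪g (x + t • v), v⟫ t := by
    intro t
    have hline : HasDerivAt (fun t : ℝ => x + t • v) v t := by
      simpa using ((hasDerivAt_id t).smul_const v).const_add x
    have hf : HasGradientAt f (g (x + t • v)) (x + t • v) :=
      (hdiff _).hasGradientAt
    have := hf.hasFDerivAt.comp_hasDerivAt t hline
    simp at this
    exact this
  have hcont : Continuous fun t : ℝ => (⟪g (x + t • v), v⟫ : ℝ) :=
    (hgcont.comp hlinec).inner continuous_const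
  have hFTC : ∫ t in (0:ℝ)..1, ⟪g (x + t • v), v⟫
      = f (x + (1:ℝ) • v) - f (x + (0:ℝ) • v) :=
    intervalIntegral.integral_eq_sub_of_hasDerivAt (fun t _ => hderiv t)
      (hcont.intervalIntegrable 0 1)
  have hmono : ∫ t in (0:ℝ)..1, ⟪g (x + t • v), v⟫
      ≤ ∫ t in (0:ℝ)..1, (⟪g x, v⟫ + L * ‖v‖ ^ 2 * t) := by
    apply intervalIntegral.integral_mono_on (by norm_num)
      (hcont.intervalIntegrable 0 1)
      (Continuous.intervalIntegrable (by continuity) 0 1)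
    intro t ht
    have h3 : ‖g (x + t • v) - g x‖ ≤ L * ‖(x + t • v) - x‖ := hsmooth _ _
    have h4 : ‖(x + t • v) - x‖ = t * ‖v‖ := by
      simp [norm_smul, abs_of_nonneg ht.1]
    have h5 : ⟪g (x + t • v) - g x, v⟫ ≤ L * ‖v‖ ^ 2 * t := by
      calc ⟪g (x + t • v) - g x, v⟫ ≤ ‖g (x + t • v) - g x‖ * ‖v‖ := real_inner_le_norm _ _
        _ ≤ (L * ‖(x + t • v) - x‖) * ‖v‖ := mul_le_mul_of_nonneg_right h3 (norm_nonneg v)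
        _ = L * ‖v‖ ^ 2 * t := by rw [h4]; ring
    rw [inner_sub_left] at h5
    linarith
  have hval : ∫ t in (0:ℝ)..1, (⟪g x, v⟫ + L * ‖v‖ ^ 2 * t)
      = ⟪g x, v⟫ + L / 2 * ‖v‖ ^ 2 := by
    rw [intervalIntegral.integral_add intervalIntegrable_const
      (Continuous.intervalIntegrable (by continuity) 0 1),
      intervalIntegral.integral_const_mul, integral_id]
    simp
    ring
  have := hFTC ▸ hmono
  simp only [one_smul, zero_smul, add_zero] at this
  linarith [hval ▸ this]

lemma normsq_eq_sum {d : ℕ} (x : EuclideanSpace ℝ (Fin d)) :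
    ‖x‖ ^ 2 = ∑ i, (x i) ^ 2 := by
  rw [EuclideanSpace.norm_eq, Real.sq_sqrt (by positivity)]
  simp [Real.norm_eq_abs, sq_abs]


lemma ssam_final_algebra (L η ρ fv fw gn bn en pn a i : ℝ)
    (hL : 0 < L) (hη : 0 < η)
    (hpe : pn ^ 2 + en ^ 2 = ρ ^ 2)
    (hdesc : fv ≤ fw - η * i + L / 2 * (η ^ 2 * (a ^ 2 + 2 * i - gn ^ 2)))
    (ha : 0 ≤ a) (hpn : 0 ≤ pn) (hbn : 0 ≤ bn)
    (htri : a ≤ L * pn + bn) :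
    fv ≤ fw - (L * η ^ 2 / 2) * gn ^ 2 + L * η ^ 2 * bn ^ 2
      + 2 * η ^ 2 * L ^ 3 * (ρ ^ 2 + en ^ 2) - (1 - L * η) * η * i := by
  have hA2 : a ^ 2 ≤ 2 * L ^ 2 * pn ^ 2 + 2 * bn ^ 2 := by
    nlinarith [sq_nonneg (L * pn - bn), mul_self_le_mul_self ha htri]
  have hp2 : pn ^ 2 ≤ ρ ^ 2 := by nlinarith [sq_nonneg en]
  have hA2' : a ^ 2 ≤ 4 * L ^ 2 * (ρ ^ 2 + en ^ 2) + 2 * bn ^ 2 := by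
    nlinarith [mul_le_mul_of_nonneg_left hp2 (by positivity : (0:ℝ) ≤ 2 * L ^ 2),
      sq_nonneg en, sq_nonneg L]
  have hc : (0:ℝ) ≤ L * η ^ 2 / 2 := by positivity
  have hkey : L * η ^ 2 / 2 * a ^ 2
      ≤ L * η ^ 2 * bn ^ 2 + 2 * η ^ 2 * L ^ 3 * (ρ ^ 2 + en ^ 2) := by
    nlinarith [mul_le_mul_of_nonneg_left hA2' hc]
  nlinarith [hkey, hdesc]

/-- Deterministic one-step sparse SAM descent inequality: for `L`-smooth `f`, any
`L`-Lipschitz map `h`, `w` with `h(w) ≠ 0`, `ρ > 0`, `η > 0`, mask `m ∈ {0,1}^d`,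
`w̃ = w + ρ·(h(w)/‖h(w)‖) ⊙ m` and `e = ρ·(h(w)/‖h(w)‖) ⊙ (1 − m)`, we have
`f(w − η·h(w̃)) ≤ f(w) − (Lη²/2)‖∇f(w)‖² + Lη²‖∇f(w) − h(w)‖² + 2η²L³(ρ² + ‖e‖²)
  − (1 − Lη)·η·⟪∇f(w), h(w̃)⟫`. -/
theorem ssam_one_step_descent_det {d : ℕ} (hd : 1 ≤ d)
    (f : EuclideanSpace ℝ (Fin d) → ℝ) (L : ℝ) (hL : 0 < L)
    (hdiff : Differentiable ℝ f)
    (hsmooth : ∀ w v : EuclideanSpace ℝ (Fin d),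
      ‖gradient f w - gradient f v‖ ≤ L * ‖w - v‖)
    (h : EuclideanSpace ℝ (Fin d) → EuclideanSpace ℝ (Fin d))
    (hhlip : ∀ w v : EuclideanSpace ℝ (Fin d), ‖h w - h v‖ ≤ L * ‖w - v‖)
    (w : EuclideanSpace ℝ (Fin d)) (hw : h w ≠ 0)
    (ρ η : ℝ) (hρ : 0 < ρ) (hη : 0 < η)
    (m : EuclideanSpace ℝ (Fin d)) (hm : ∀ i, m i = 0 ∨ m i = 1) :
    f (w - η • h (w + hadamard ((ρ / ‖h w‖) • h w) m))
      ≤ f w - (L * η ^ 2 / 2) * ‖gradient f w‖ ^ 2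
        + L * η ^ 2 * ‖gradient f w - h w‖ ^ 2
        + 2 * η ^ 2 * L ^ 3 *
            (ρ ^ 2 + ‖hadamard ((ρ / ‖h w‖) • h w) (onesVec d - m)‖ ^ 2)
        - (1 - L * η) * η *
            ⟪gradient f w, h (w + hadamard ((ρ / ‖h w‖) • h w) m)⟫ := by
  set s := (ρ / ‖h w‖) • h w with hs
  set p := hadamard s m with hp
  set e := hadamard s (onesVec d - m) with he
  set g := gradient f w with hg
  set H := h (w + p) with hH
  have hhw : 0 < ‖h w‖ := norm_pos_iff.mpr hw
  have hsnorm : ‖s‖ = ρ := by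
    rw [hs, norm_smul, Real.norm_eq_abs, abs_of_pos (div_pos hρ hhw),
      div_mul_cancel₀ _ hhw.ne']
  have hpe : ‖p‖ ^ 2 + ‖e‖ ^ 2 = ρ ^ 2 := by
    have hs2 : ∑ i, (s i) ^ 2 = ρ ^ 2 := by rw [← normsq_eq_sum, hsnorm]
    rw [normsq_eq_sum, normsq_eq_sum, ← Finset.sum_add_distrib, ← hs2]
    apply Finset.sum_congr rfl
    intro i _
    have hpi : p i = s i * m i := rfl
    have hei : e i = s i * (1 - m i) := by
      show s i * (onesVec d - m) i = s i * (1 - m i)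
      congr 1
    rcases hm i with h0 | h0 <;> rw [hpi, hei, h0] <;> ring
  -- descent lemma
  have hdesc0 := descent_lemma_aux f L hL hdiff hsmooth w (-(η • H))
  rw [← sub_eq_add_neg] at hdesc0
  have hdesc : f (w - η • H) ≤ f w - η * ⟪g, H⟫ + L / 2 * (η ^ 2 * ‖H‖ ^ 2) := by
    have h1 : ⟪g, -(η • H)⟫ = -(η * ⟪g, H⟫) := by
      rw [inner_neg_right, real_inner_smul_right]
    have h2 : ‖-(η • H)‖ ^ 2 = η ^ 2 * ‖H‖ ^ 2 := by
      rw [norm_neg, norm_smul, Real.norm_eq_abs, mul_pow, sq_abs]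
    calc f (w - η • H) ≤ f w + ⟪g, -(η • H)⟫ + L / 2 * ‖-(η • H)‖ ^ 2 := hdesc0
      _ = f w - η * ⟪g, H⟫ + L / 2 * (η ^ 2 * ‖H‖ ^ 2) := by rw [h1, h2]; ring
  have hnormH : ‖H‖ ^ 2 = ‖H - g‖ ^ 2 + 2 * ⟪g, H⟫ - ‖g‖ ^ 2 := by
    have h1 := @norm_sub_sq_real (EuclideanSpace ℝ (Fin d)) _ _ H g
    have h2 : ⟪H, g⟫ = ⟪g, H⟫ := real_inner_comm g H
    linarith
  have hdesc2 : f (w - η • H) ≤ f w - η * ⟪g, H⟫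
      + L / 2 * (η ^ 2 * (‖H - g‖ ^ 2 + 2 * ⟪g, H⟫ - ‖g‖ ^ 2)) := by
    rw [← hnormH]; exact hdesc
  -- bound ‖H - g‖
  have htri : ‖H - g‖ ≤ L * ‖p‖ + ‖g - h w‖ := by
    calc ‖H - g‖ ≤ ‖H - h w‖ + ‖h w - g‖ := norm_sub_le_norm_sub_add_norm_sub _ _ _
      _ ≤ L * ‖p‖ + ‖g - h w‖ := by
          have h1 : ‖H - h w‖ ≤ L * ‖p‖ := by
            have := hhlip (w + p) w
            simpa using this
          have h2 : ‖h w - g‖ = ‖g - h w‖ := norm_sub_rev _ _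
          linarith
  exact ssam_final_algebra L η ρ _ _ _ _ _ _ _ _ hL hη hpe hdesc2
    (norm_nonneg _) (norm_nonneg _) (norm_nonneg _) htri
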